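/- arXiv:2603.17041 — 2 statements merged into one kernel-verified Lean document; each statement's English description precedes it below -/
import Mathlib

section
/- (Weyl eigenvalue perturbation.) Let A and B be symmetric n × n real matrices, and let λ₁(M) ≥ λ₂(M) ≥ ⋯ ≥ λ_n(M) denote the eigenvalues of a symmetric matrix M listed in non-increasing order with multiplicity. Then for every k ∈ {1, …, n}, |λ_k(A) − λ_k(B)| ≤ ‖A − B‖₂, where ‖·‖₂ is the ℓ²→ℓ² operator norm. -/
/-- The ℓ²→ℓ² operator norm of a real matrix, i.e. the norm of the matrix regarded as a
linear map between Euclidean spaces. -/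
noncomputable def opNorm {m n : ℕ} (M : Matrix (Fin m) (Fin n) ℝ) : ℝ :=
  ‖LinearMap.toContinuousLinearMap (Matrix.toEuclideanLin M)‖

open Submodule Finset

noncomputable section


/-- Rayleigh lower bound on a span of eigenvectors. -/
lemma rayleigh_lower {n : ℕ} (b : OrthonormalBasis (Fin n) ℝ (EuclideanSpace ℝ (Fin n)))
    (T : EuclideanSpace ℝ (Fin n) →ₗ[ℝ] EuclideanSpace ℝ (Fin n))
    (μ : Fin n → ℝ) (hT : ∀ i, T (b i) = μ i • b i)
    (S : Set (Fin n)) (c : ℝ) (hc : ∀ i ∈ S, c ≤ μ i)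
    (x : EuclideanSpace ℝ (Fin n)) (hx : x ∈ Submodule.span ℝ (b '' S)) :
    c * ‖x‖ ^ 2 ≤ inner ℝ x (T x) := by
  classical
  -- coefficients
  set t : Fin n → ℝ := fun i => (inner ℝ (b i) x : ℝ) with ht
  have hzero : ∀ i ∉ S, t i = 0 := by
    intro i hi
    have : (b i) ∈ (Submodule.span ℝ (b '' S))ᗮ := by
      rw [Submodule.mem_orthogonal]
      intro v hv
      induction hv using Submodule.span_induction with
      | mem v hv =>
        obtain ⟨j, hj, rfl⟩ := hv
        exact b.orthonormal.2 (fun h => hi (h ▸ hj))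
      | zero => simp
      | add u v _ _ hu hv => simp [inner_add_left, hu, hv]
      | smul a u _ hu => simp [inner_smul_left, hu]
    have := (Submodule.mem_orthogonal _ _).1 this x hx
    simpa [ht, real_inner_comm, mul_comm] using this
  have hTx : T x = ∑ i, t i • (μ i • b i) := by
    conv_lhs => rw [← b.sum_repr' x]
    rw [map_sum]
    simp_rw [map_smul, hT]
    rfl
  have h1 : (inner ℝ x (T x) : ℝ) = ∑ i, μ i * t i ^ 2 := by
    rw [hTx, inner_sum]
    refine Finset.sum_congr rfl fun i _ => ?_
    rw [real_inner_smul_right, real_inner_smul_right, ht]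
    dsimp only
    rw [real_inner_comm x (b i)]
    ring
  have h2 : ‖x‖ ^ 2 = ∑ i, t i ^ 2 := by
    rw [← real_inner_self_eq_norm_sq, ← b.sum_inner_mul_inner x x]
    refine Finset.sum_congr rfl fun i _ => ?_
    rw [ht]
    dsimp only
    rw [real_inner_comm x (b i)]
    ring
  rw [h1, h2, Finset.mul_sum]
  refine Finset.sum_le_sum fun i _ => ?_
  by_cases hi : i ∈ S
  · exact mul_le_mul_of_nonneg_right (hc i hi) (sq_nonneg _)
  · simp [hzero i hi]

lemma weyl_one_side
    (n : ℕ) (A B : Matrix (Fin n) (Fin n) ℝ)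
    (hA : A.IsHermitian) (hB : B.IsHermitian)
    (μA μB : Fin n → ℝ) (σA σB : Equiv.Perm (Fin n))
    (hμA : μA = hA.eigenvalues ∘ σA) (hμB : μB = hB.eigenvalues ∘ σB)
    (hA' : Antitone μA) (hB' : Antitone μB) (k : Fin n) :
    μA k - μB k ≤ ‖LinearMap.toContinuousLinearMap (Matrix.toEuclideanLin (A - B))‖ := by
  classical
  set vA := hA.eigenvectorBasis with hvA
  set vB := hB.eigenvectorBasis with hvB
  set SA : Set (Fin n) := ⇑σA '' Set.Iic k with hSA
  set SB : Set (Fin n) := ⇑σB '' Set.Ici k with hSB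
  set V := Submodule.span ℝ (⇑vA '' SA) with hV
  set W := Submodule.span ℝ (⇑vB '' SB) with hW
  have himA : Set.range (fun j : Set.Iic k => vA (σA j)) = ⇑vA '' SA := by
    rw [show (fun j : Set.Iic k => vA (σA j))
        = (⇑vA ∘ ⇑σA) ∘ ((↑) : Set.Iic k → Fin n) from rfl,
      Set.range_comp, Subtype.range_coe, Set.image_comp]
  have himB : Set.range (fun j : Set.Ici k => vB (σB j)) = ⇑vB '' SB := by
    rw [show (fun j : Set.Ici k => vB (σB j))
        = (⇑vB ∘ ⇑σB) ∘ ((↑) : Set.Ici k → Fin n) from rfl,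
      Set.range_comp, Subtype.range_coe, Set.image_comp]
  have hdimV : Module.finrank ℝ V = k.1 + 1 := by
    rw [hV, ← himA]
    exact (finrank_span_eq_card ((vA.orthonormal.comp
      (fun j : Set.Iic k => σA j) (σA.injective.comp Subtype.val_injective)).linearIndependent)).trans
      (by rw [Fintype.card_Iic, Fin.card_Iic])
  have hdimW : Module.finrank ℝ W = n - k.1 := by
    rw [hW, ← himB]
    exact (finrank_span_eq_card ((vB.orthonormal.comp
      (fun j : Set.Ici k => σB j) (σB.injective.comp Subtype.val_injective)).linearIndependent)).trans
      (by rw [Fintype.card_Ici, Fin.card_Ici])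
  have hVW : V ⊓ W ≠ ⊥ := by
    intro hbot
    have h1 := Submodule.finrank_sup_add_finrank_inf_eq V W
    have h2 : Module.finrank ℝ ↥(V ⊔ W) ≤ n := by
      simpa using Submodule.finrank_le (V ⊔ W)
    rw [hbot, finrank_bot, hdimV, hdimW] at h1
    have := k.isLt
    omega
  obtain ⟨x, hxVW, hx0⟩ := Submodule.exists_mem_ne_zero_of_ne_bot hVW
  have hTA : ∀ i, Matrix.toEuclideanLin A (vA i) = hA.eigenvalues i • vA i := by
    intro i
    ext j
    have := congrFun (hA.mulVec_eigenvectorBasis i) j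
    simpa [Matrix.toEuclideanLin_apply] using this
  have hTB : ∀ i, Matrix.toEuclideanLin B (vB i) = hB.eigenvalues i • vB i := by
    intro i
    ext j
    have := congrFun (hB.mulVec_eigenvectorBasis i) j
    simpa [Matrix.toEuclideanLin_apply] using this
  have hlow : μA k * ‖x‖ ^ 2 ≤ inner ℝ x (Matrix.toEuclideanLin A x) := by
    refine rayleigh_lower vA (Matrix.toEuclideanLin A) hA.eigenvalues hTA SA (μA k) ?_ x
      (Submodule.mem_inf.1 hxVW).1
    rintro i ⟨j, hj, rfl⟩
    have := hA' hj
    rw [hμA] at this ⊢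
    simpa using this
  have hup : inner ℝ x (Matrix.toEuclideanLin B x) ≤ μB k * ‖x‖ ^ 2 := by
    have := rayleigh_lower vB (-(Matrix.toEuclideanLin B)) (-hB.eigenvalues)
      (fun i => by simp [hTB i, neg_smul]) SB (-(μB k)) ?_ x (Submodule.mem_inf.1 hxVW).2
    · simp only [LinearMap.neg_apply, inner_neg_right, neg_mul] at this
      linarith
    · rintro i ⟨j, hj, rfl⟩
      have := hB' hj
      rw [hμB] at this ⊢
      simp only [Pi.neg_apply, neg_le_neg_iff]
      simpa using this
  have hub : (inner ℝ x (Matrix.toEuclideanLin (A - B) x) : ℝ)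
      ≤ ‖LinearMap.toContinuousLinearMap (Matrix.toEuclideanLin (A - B))‖ * ‖x‖ ^ 2 := by
    set L := LinearMap.toContinuousLinearMap (Matrix.toEuclideanLin (A - B)) with hL
    have h1 : Matrix.toEuclideanLin (A - B) x = L x := by simp [hL]
    calc (inner ℝ x (Matrix.toEuclideanLin (A - B) x) : ℝ)
        ≤ ‖x‖ * ‖Matrix.toEuclideanLin (A - B) x‖ := real_inner_le_norm _ _
      _ ≤ ‖x‖ * (‖L‖ * ‖x‖) := by rw [h1]; gcongr; exact L.le_opNorm x
      _ = ‖L‖ * ‖x‖ ^ 2 := by ring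
  have hsub : (inner ℝ x (Matrix.toEuclideanLin (A - B) x) : ℝ)
      = inner ℝ x (Matrix.toEuclideanLin A x) - inner ℝ x (Matrix.toEuclideanLin B x) := by
    rw [map_sub]
    simp [inner_sub_right]
  have hxpos : (0:ℝ) < ‖x‖ ^ 2 := pow_pos (norm_pos_iff.2 hx0) 2
  have : (μA k - μB k) * ‖x‖ ^ 2
      ≤ ‖LinearMap.toContinuousLinearMap (Matrix.toEuclideanLin (A - B))‖ * ‖x‖ ^ 2 := by
    rw [sub_mul]
    linarith [hlow, hup, hub, hsub]
  exact le_of_mul_le_mul_right this hxpos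

theorem weyl_eigenvalue_perturbation
    (n : ℕ) (A B : Matrix (Fin n) (Fin n) ℝ)
    (hA : A.IsHermitian) (hB : B.IsHermitian)
    (μA μB : Fin n → ℝ) (σA σB : Equiv.Perm (Fin n))
    (hμA : μA = hA.eigenvalues ∘ σA) (hμB : μB = hB.eigenvalues ∘ σB)
    (hA' : Antitone μA) (hB' : Antitone μB) :
    ∀ k : Fin n, |μA k - μB k| ≤ opNorm (A - B) := by
  intro k
  have hswap : opNorm (B - A) = opNorm (A - B) := by
    unfold opNorm
    rw [show B - A = -(A - B) by rw [neg_sub], map_neg, map_neg, norm_neg]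
  rw [abs_sub_le_iff]
  exact ⟨weyl_one_side n A B hA hB μA μB σA σB hμA hμB hA' hB' k,
    hswap ▸ weyl_one_side n B A hB hA μB μA σB σA hμB hμA hB' hA' k⟩
end
end

section
/- (Davis–Kahan, rank-one form.) Let A and B be symmetric d × d real matrices with d ≥ 2, let λ₁(A) ≥ λ₂(A) ≥ ⋯ denote the eigenvalues of A in non-increasing order, and suppose the eigengap γ = λ₁(A) − λ₂(A) is strictly positive and ‖A − B‖_F < γ. Let u and v be unit vectors in ℝ^d satisfying A u = λ₁(A) u and B v = λ₁(B) v, where λ₁(B) is the largest eigenvalue of B. Then the sine of the principal angle between the spans of u and v satisfies √(1 − ⟨u, v⟩²) ≤ 2‖A − B‖_F / γ. -/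
local notation "⟪" x ", " y "⟫" => @inner ℝ _ _ x y

private def te {d : ℕ} (x : Fin d → ℝ) : EuclideanSpace ℝ (Fin d) := WithLp.toLp 2 x

private lemma te_apply {d : ℕ} (x : Fin d → ℝ) (i : Fin d) : te x i = x i := rfl

private lemma euc_inner_eq {d : ℕ} (x y : EuclideanSpace ℝ (Fin d)) :
    ⟪x, y⟫ = ∑ i, x i * y i := by
  simp [PiLp.inner_apply, RCLike.inner_apply, conj_trivial]
  exact Finset.sum_congr rfl fun _ _ => mul_comm _ _

private lemma herm_inner_mulVec {d : ℕ} {M : Matrix (Fin d) (Fin d) ℝ} (hM : M.IsHermitian)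
    (x y : EuclideanSpace ℝ (Fin d)) :
    ⟪x, te (M.mulVec y)⟫ = ⟪te (M.mulVec x), y⟫ := by
  rw [euc_inner_eq, euc_inner_eq]
  simp only [te_apply, Matrix.mulVec, dotProduct, Finset.mul_sum, Finset.sum_mul]
  rw [Finset.sum_comm]
  refine Finset.sum_congr rfl fun i _ => Finset.sum_congr rfl fun j _ => ?_
  have : M i j = M j i := by
    conv_lhs => rw [← hM]
    simp [Matrix.conjTranspose_apply]
  rw [this]; ring

private lemma herm_spectral {d : ℕ} {M : Matrix (Fin d) (Fin d) ℝ} (hM : M.IsHermitian)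
    (x : EuclideanSpace ℝ (Fin d)) :
    ⟪x, te (M.mulVec x)⟫
      = ∑ j, hM.eigenvalues j * ⟪hM.eigenvectorBasis j, x⟫ ^ 2 := by
  set b := hM.eigenvectorBasis with hb
  have hx : (∑ j, ⟪b j, x⟫ • b j) = x := b.sum_repr' x
  have key : ∀ y : EuclideanSpace ℝ (Fin d), ⟪x, y⟫ = ∑ j, ⟪b j, x⟫ * ⟪b j, y⟫ := by
    intro y
    conv_lhs => rw [← hx]
    rw [sum_inner]
    exact Finset.sum_congr rfl fun j _ => real_inner_smul_left _ _ _
  calc ⟪x, te (M.mulVec x)⟫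
      = ∑ j, ⟪b j, x⟫ * ⟪b j, te (M.mulVec x)⟫ := key _
    _ = ∑ j, hM.eigenvalues j * ⟪b j, x⟫ ^ 2 := by
        refine Finset.sum_congr rfl fun j _ => ?_
        rw [herm_inner_mulVec hM]
        have h1 : te (M.mulVec (b j)) = hM.eigenvalues j • b j :=
          congrArg te (hM.mulVec_eigenvectorBasis j)
        rw [h1, real_inner_smul_left]
        ring

private lemma euc_parseval {d : ℕ} (b : OrthonormalBasis (Fin d) ℝ (EuclideanSpace ℝ (Fin d)))
    (x : EuclideanSpace ℝ (Fin d)) :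
    ∑ j, ⟪b j, x⟫ ^ 2 = ⟪x, x⟫ := by
  have h := b.sum_inner_mul_inner x x
  calc ∑ j, ⟪b j, x⟫ ^ 2
      = ∑ j, ⟪x, b j⟫ * ⟪b j, x⟫ := by
        refine Finset.sum_congr rfl fun j _ => ?_
        rw [real_inner_comm x]; ring
    _ = ⟪x, x⟫ := h

private lemma arith1 {γ ε S s X μ : ℝ} (h1 : (μ - ε) * S - s * ε ≤ X)
    (h2 : X ≤ (μ - γ) * S) : γ * S ≤ ε * S + ε * s := by nlinarith

private lemma arith2 {γ ε s : ℝ} (hγ : 0 < γ) (hε : 0 ≤ ε) (hs0 : 0 ≤ s) (hs1 : s ≤ 1)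
    (hkey : γ * s ^ 2 ≤ ε * s ^ 2 + ε * s) : s * γ ≤ 2 * ε := by
  rcases eq_or_lt_of_le hs0 with h0 | hpos
  · rw [← h0]; linarith
  · have h : γ * s ^ 2 ≤ 2 * ε * s := by nlinarith [mul_nonneg (mul_nonneg hε hs0) (sub_nonneg.2 hs1)]
    have h2 := le_of_mul_le_mul_right (by nlinarith : s * γ * s ≤ 2 * ε * s) hpos
    linarith

/-- Frobenius norm of a real matrix. -/
noncomputable def frobNorm {m n : ℕ} (A : Matrix (Fin m) (Fin n) ℝ) : ℝ :=
  Real.sqrt (∑ i, ∑ j, (A i j) ^ 2)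

private lemma frob_mulVec {d : ℕ} (E : Matrix (Fin d) (Fin d) ℝ) (x : Fin d → ℝ)
    (hx : ∑ i, x i ^ 2 = 1) :
    ∑ i, (E.mulVec x i) ^ 2 ≤ frobNorm E ^ 2 := by
  have h1 : frobNorm E ^ 2 = ∑ i, ∑ j, (E i j) ^ 2 := by
    rw [frobNorm, Real.sq_sqrt]; positivity
  rw [h1]
  refine Finset.sum_le_sum fun i _ => ?_
  calc (E.mulVec x i) ^ 2 = (∑ j, E i j * x j) ^ 2 := rfl
    _ ≤ (∑ j, (E i j) ^ 2) * (∑ j, x j ^ 2) := Finset.sum_mul_sq_le_sq_mul_sq _ _ _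
    _ = ∑ j, (E i j) ^ 2 := by rw [hx, mul_one]

theorem davis_kahan_rank_one
    (d : ℕ) (hd : 2 ≤ d) (A B : Matrix (Fin d) (Fin d) ℝ)
    (hA : A.IsHermitian) (hB : B.IsHermitian)
    -- `μA` lists the eigenvalues of `A` (with multiplicity) in non-increasing order
    (μA : Fin d → ℝ) (σA : Equiv.Perm (Fin d))
    (hμA : μA = hA.eigenvalues ∘ σA) (hmono : Antitone μA)
    (i0 i1 : Fin d) (hi0 : (i0 : ℕ) = 0) (hi1 : (i1 : ℕ) = 1)
    (γ : ℝ) (hγ : γ = μA i0 - μA i1) (hγpos : 0 < γ)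
    (hpert : frobNorm (A - B) < γ)
    (u v : Fin d → ℝ)
    (hu : Real.sqrt (∑ i, u i ^ 2) = 1) (hv : Real.sqrt (∑ i, v i ^ 2) = 1)
    (hAu : A.mulVec u = μA i0 • u)
    -- `lamB` is the largest eigenvalue of `B`
    (lamB : ℝ)
    (hlamB : IsGreatest {t : ℝ | ∃ w : Fin d → ℝ, w ≠ 0 ∧ B.mulVec w = t • w} lamB)
    (hBv : B.mulVec v = lamB • v) :
    Real.sqrt (1 - (∑ i, u i * v i) ^ 2) ≤ 2 * frobNorm (A - B) / γ := by
  set E : Matrix (Fin d) (Fin d) ℝ := A - B with hE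
  set ε : ℝ := frobNorm E with hεdef
  have hε0 : 0 ≤ ε := Real.sqrt_nonneg _
  -- unit norms
  have hu2 : ∑ i, u i ^ 2 = 1 := by
    have h := congrArg (· ^ 2) hu
    simpa [Real.sq_sqrt (Finset.sum_nonneg fun i _ => sq_nonneg (u i))] using h
  have hv2 : ∑ i, v i ^ 2 = 1 := by
    have h := congrArg (· ^ 2) hv
    simpa [Real.sq_sqrt (Finset.sum_nonneg fun i _ => sq_nonneg (v i))] using h
  set c : ℝ := ∑ i, u i * v i with hc
  set uu : EuclideanSpace ℝ (Fin d) := te u with huu_def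
  set vv : EuclideanSpace ℝ (Fin d) := te v with hvv_def
  have huuuu : ⟪uu, uu⟫ = 1 := by
    rw [euc_inner_eq]
    simpa [huu_def, te_apply, ← sq] using hu2
  have hvvvv : ⟪vv, vv⟫ = 1 := by
    rw [euc_inner_eq]
    simpa [hvv_def, te_apply, ← sq] using hv2
  have huv : ⟪uu, vv⟫ = c := by
    rw [euc_inner_eq]; rfl
  set ww : EuclideanSpace ℝ (Fin d) := vv - c • uu with hww_def
  have hworth : ⟪uu, ww⟫ = 0 := by
    rw [hww_def, inner_sub_right, real_inner_smul_right, huv, huuuu]; ring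
  have hwworth' : ⟪ww, uu⟫ = 0 := by rw [real_inner_comm]; exact hworth
  have hvu : ⟪vv, uu⟫ = c := by rw [real_inner_comm]; exact huv
  have hS : ⟪ww, ww⟫ = 1 - c ^ 2 := by
    rw [hww_def, inner_sub_left, inner_sub_right, inner_sub_right,
      real_inner_smul_left, real_inner_smul_right, real_inner_smul_left,
      real_inner_smul_right, huuuu, hvvvv, huv, hvu]
    ring
  have hSnn : (0:ℝ) ≤ 1 - c ^ 2 := hS ▸ real_inner_self_nonneg
  -- eigen-structure of A
  set lam := hA.eigenvalues with hlam
  set b := hA.eigenvectorBasis with hb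
  set k := σA i0 with hk
  have hlamk : lam k = μA i0 := by rw [hμA]; rfl
  have hμlt : μA i1 < μA i0 := by linarith [hγ ▸ hγpos]
  have hlamle : ∀ j, j ≠ k → lam j ≤ μA i1 := by
    intro j hj
    have hm : σA (σA.symm j) = j := σA.apply_symm_apply j
    have hmne : σA.symm j ≠ i0 := by
      intro h; apply hj; rw [← hm, h]
    have h1le : i1 ≤ σA.symm j := by
      rw [Fin.le_def, hi1]
      have : ((σA.symm j : Fin d) : ℕ) ≠ 0 := by
        intro h0
        apply hmne
        exact Fin.ext (by rw [h0, hi0])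
      omega
    have := hmono h1le
    calc lam j = μA (σA.symm j) := by rw [hμA]; simp [hm]
      _ ≤ μA i1 := this
  -- u is (±) the top eigenvector
  have hcu0 : ∀ j, j ≠ k → ⟪b j, uu⟫ = 0 := by
    intro j hj
    have h1 : ⟪b j, te (A.mulVec u)⟫ = μA i0 * ⟪b j, uu⟫ := by
      rw [hAu]
      exact real_inner_smul_right _ _ _
    have h2 : ⟪b j, te (A.mulVec u)⟫ = lam j * ⟪b j, uu⟫ := by
      have h3 : te (A.mulVec u) = te (A.mulVec uu) := rfl
      rw [h3, herm_inner_mulVec hA]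
      have h4 : te (A.mulVec (b j)) = lam j • b j := congrArg te (hA.mulVec_eigenvectorBasis j)
      rw [h4, real_inner_smul_left]
    have hne : lam j ≠ μA i0 := by
      have := hlamle j hj; linarith
    have : (μA i0 - lam j) * ⟪b j, uu⟫ = 0 := by
      rw [sub_mul, ← h1, ← h2]; ring
    rcases mul_eq_zero.1 this with h | h
    · exact absurd (by linarith [hlamle j hj] : lam j = μA i0) hne
    · exact h
  have hck2 : ⟪b k, uu⟫ ^ 2 = 1 := by
    have hp := euc_parseval b uu
    rw [huuuu] at hp
    have hsingle := Finset.sum_eq_single (f := fun j => ⟪b j, uu⟫ ^ 2) k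
      (fun j _ hj => by simp [hcu0 j hj])
      (fun h => absurd (Finset.mem_univ k) h)
    exact hsingle.symm.trans hp
  have hckne : ⟪b k, uu⟫ ≠ 0 := by
    intro h; rw [h] at hck2; norm_num at hck2
  have hurep : uu = ⟪b k, uu⟫ • b k := by
    have hx := b.sum_repr' uu
    have hsingle := Finset.sum_eq_single (f := fun j => ⟪b j, uu⟫ • b j) k
      (fun j _ hj => by simp [hcu0 j hj])
      (fun h => absurd (Finset.mem_univ k) h)
    simpa using hx.symm.trans hsingle
  have hbkw : ⟪b k, ww⟫ = 0 := by
    have : ⟪uu, ww⟫ = ⟪b k, uu⟫ * ⟪b k, ww⟫ := by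
      conv_lhs => rw [hurep]
      exact real_inner_smul_left _ _ _
    rw [hworth] at this
    exact (mul_eq_zero.1 this.symm).resolve_left hckne
  -- Rayleigh gap bound for w
  have hwAw : ⟪ww, te (A.mulVec ww)⟫ ≤ μA i1 * (1 - c ^ 2) := by
    rw [herm_spectral hA ww]
    have hp : ∑ j, ⟪b j, ww⟫ ^ 2 = 1 - c ^ 2 := by rw [euc_parseval b ww, hS]
    calc ∑ j, lam j * ⟪b j, ww⟫ ^ 2
        ≤ ∑ j, μA i1 * ⟪b j, ww⟫ ^ 2 := by
          refine Finset.sum_le_sum fun j _ => ?_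
          by_cases hj : j = k
          · rw [hj, hbkw]; simp
          · exact mul_le_mul_of_nonneg_right (hlamle j hj) (sq_nonneg _)
      _ = μA i1 * (1 - c ^ 2) := by rw [← Finset.mul_sum, hp]
  -- Rayleigh upper bound for B at u
  have hBev : ∀ j, hB.eigenvalues j ≤ lamB := by
    intro j
    refine hlamB.2 ⟨(hB.eigenvectorBasis j : EuclideanSpace ℝ (Fin d)), ?_, hB.mulVec_eigenvectorBasis j⟩
    exact fun h => hB.eigenvectorBasis.orthonormal.ne_zero j (congrArg (WithLp.toLp 2) h)
  have huBu : ⟪uu, te (B.mulVec uu)⟫ ≤ lamB := by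
    rw [herm_spectral hB uu]
    have hp := euc_parseval hB.eigenvectorBasis uu
    rw [huuuu] at hp
    calc ∑ j, hB.eigenvalues j * ⟪hB.eigenvectorBasis j, uu⟫ ^ 2
        ≤ ∑ j, lamB * ⟪hB.eigenvectorBasis j, uu⟫ ^ 2 :=
          Finset.sum_le_sum fun j _ => mul_le_mul_of_nonneg_right (hBev j) (sq_nonneg _)
      _ = lamB := by rw [← Finset.mul_sum, hp, mul_one]
  -- Frobenius bounds
  have hEu2 : ∑ i, (E.mulVec u i) ^ 2 ≤ ε ^ 2 := frob_mulVec E u hu2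
  have hEv2 : ∑ i, (E.mulVec v i) ^ 2 ≤ ε ^ 2 := frob_mulVec E v hv2
  have hinnerEuEu : ⟪te (E.mulVec u), te (E.mulVec u)⟫ = ∑ i, (E.mulVec u i) ^ 2 := by
    rw [euc_inner_eq]
    exact Finset.sum_congr rfl fun i _ => (sq _).symm
  have hinnerEvEv : ⟪te (E.mulVec v), te (E.mulVec v)⟫ = ∑ i, (E.mulVec v i) ^ 2 := by
    rw [euc_inner_eq]
    exact Finset.sum_congr rfl fun i _ => (sq _).symm
  have huEu : ⟪uu, te (E.mulVec u)⟫ ≤ ε := by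
    have hcs := real_inner_mul_inner_self_le uu (te (E.mulVec u))
    rw [huuuu, hinnerEuEu, one_mul] at hcs
    set t : ℝ := ⟪uu, te (E.mulVec u)⟫ with ht
    have h1 : t ^ 2 ≤ ε ^ 2 := by
      calc t ^ 2 = t * t := sq t
        _ ≤ ∑ i, (E.mulVec u i) ^ 2 := hcs
        _ ≤ ε ^ 2 := hEu2
    exact le_of_sq_le_sq h1 hε0
  have hwEv : (⟪ww, te (E.mulVec v)⟫) ^ 2 ≤ (1 - c ^ 2) * ε ^ 2 := by
    have hcs := real_inner_mul_inner_self_le ww (te (E.mulVec v))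
    rw [hS, hinnerEvEv] at hcs
    set t : ℝ := ⟪ww, te (E.mulVec v)⟫ with ht
    calc t ^ 2 = t * t := sq t
      _ ≤ (1 - c ^ 2) * ∑ i, (E.mulVec v i) ^ 2 := hcs
      _ ≤ (1 - c ^ 2) * ε ^ 2 := mul_le_mul_of_nonneg_left hEv2 hSnn
  -- lamB is close to μA i0
  have hlamlow : μA i0 - ε ≤ lamB := by
    have hsplit : te (B.mulVec uu) = te (A.mulVec u) - te (E.mulVec u) := by
      have : B.mulVec u = A.mulVec u - E.mulVec u := by
        rw [hE, Matrix.sub_mulVec]; ring_nf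
      exact congrArg te this
    have h1 : ⟪uu, te (B.mulVec uu)⟫ = μA i0 - ⟪uu, te (E.mulVec u)⟫ := by
      rw [hsplit, inner_sub_right, hAu]
      have : ⟪uu, te (μA i0 • u)⟫ = μA i0 * ⟪uu, uu⟫ := real_inner_smul_right _ _ _
      rw [this, huuuu, mul_one]
    linarith [huBu, h1 ▸ huBu, huEu, h1.symm.trans_le huBu]
  -- the central identity
  have hcentral : ⟪ww, te (A.mulVec ww)⟫ = lamB * (1 - c ^ 2) + ⟪ww, te (E.mulVec v)⟫ := by
    have hAw : te (A.mulVec ww) = te (A.mulVec v) - (c * μA i0) • uu := by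
      have h1 : A.mulVec ww = A.mulVec v - c • A.mulVec u := by
        show A.mulVec (v - c • u) = _
        rw [Matrix.mulVec_sub, Matrix.mulVec_smul]
      have h2 : A.mulVec ww = A.mulVec v - (c * μA i0) • u := by
        rw [h1, hAu, smul_smul]
      calc te (A.mulVec ww) = te (A.mulVec v - (c * μA i0) • u) := congrArg te h2
        _ = te (A.mulVec v) - (c * μA i0) • uu := rfl
    have hAv : te (A.mulVec v) = lamB • vv + te (E.mulVec v) := by
      have : A.mulVec v = lamB • v + E.mulVec v := by
        rw [hE, Matrix.sub_mulVec, hBv]; ring_nf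
      calc te (A.mulVec v) = te (lamB • v + E.mulVec v) := congrArg te this
        _ = lamB • vv + te (E.mulVec v) := rfl
    have hwv : ⟪ww, vv⟫ = 1 - c ^ 2 := by
      rw [hww_def, inner_sub_left, real_inner_smul_left, hvvvv, huv]
      ring
    rw [hAw, inner_sub_right, real_inner_smul_right, hwworth', hAv, inner_add_right,
      real_inner_smul_right, hwv]
    ring
  -- combine
  set s : ℝ := Real.sqrt (1 - c ^ 2) with hsdef
  have hs0 : 0 ≤ s := Real.sqrt_nonneg _
  have hs2 : s ^ 2 = 1 - c ^ 2 := Real.sq_sqrt hSnn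
  have hs1 : s ≤ 1 := by
    rw [hsdef]
    calc Real.sqrt (1 - c ^ 2) ≤ Real.sqrt 1 := Real.sqrt_le_sqrt (by linarith [sq_nonneg c])
      _ = 1 := Real.sqrt_one
  have hwEvlow : -(s * ε) ≤ ⟪ww, te (E.mulVec v)⟫ := by
    have h1 : (⟪ww, te (E.mulVec v)⟫) ^ 2 ≤ (s * ε) ^ 2 := by
      rw [mul_pow, hs2]; exact hwEv
    exact (abs_le_of_sq_le_sq' h1 (mul_nonneg hs0 hε0)).1
  have hkey : γ * (1 - c ^ 2) ≤ ε * (1 - c ^ 2) + ε * s := by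
    have h1 : ⟪ww, te (A.mulVec ww)⟫ ≥ (μA i0 - ε) * (1 - c ^ 2) - s * ε := by
      rw [hcentral]
      have := mul_le_mul_of_nonneg_right hlamlow hSnn
      linarith [hwEvlow]
    have h2 := hwAw
    have h3 : μA i1 = μA i0 - γ := by linarith [hγ]
    rw [h3] at h2
    exact arith1 h1 h2
  rw [le_div_iff₀ hγpos]
  rw [← hs2] at hkey
  exact arith2 hγpos hε0 hs0 hs1 hkey
end
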